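/- Let (A,b,c) satisfy the quadrature conditions ∑ᵢ bᵢcᵢ^{k-1} = 1/k for 1 ≤ k ≤ m and the double bush conditions p bᵀC^{p-1}Ac^q − q bᵀC^{q-1}Ac^p = 1/(q+1) − 1/(p+1) for 1 ≤ p < q ≤ m−1. Then for all polynomials P of degree ≤ p ≤ m−1 and Q of degree ≤ q ≤ m−1 with P(0) = Q(0) = 0, one has bᵀP'(C)AQ(c) − bᵀQ'(C)AP(c) = P(1)∫₀¹Q(t)dt − Q(1)∫₀¹P(t)dt. -/

import Mathlib

open Finset Polynomial

private lemma db_deriv_eval (p : ℕ) (P : Polynomial ℝ) (hPd : P.natDegree ≤ p) (x : ℝ) :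
    (Polynomial.derivative P).eval x
      = ∑ k ∈ Finset.range (p+1), (k:ℝ) * P.coeff k * x ^ (k-1) := by
  have h1 : (Polynomial.derivative P).natDegree < p + 1 :=
    lt_of_le_of_lt ((P.natDegree_derivative_le).trans ((Nat.sub_le _ _).trans hPd))
      (Nat.lt_succ_self p)
  rw [Polynomial.eval_eq_sum_range' h1]
  rw [Finset.sum_range_succ, Finset.sum_range_succ' (fun k => (k:ℝ) * P.coeff k * x ^ (k-1)) p]
  have hc : P.coeff (p+1) = 0 :=
    P.coeff_eq_zero_of_natDegree_lt (lt_of_le_of_lt hPd (Nat.lt_succ_self p))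
  simp only [Polynomial.coeff_derivative, hc, Nat.cast_zero, zero_mul, mul_zero, add_zero,
    zero_add, Nat.add_sub_cancel]
  refine Finset.sum_congr rfl fun k _ => ?_
  push_cast
  ring

private lemma db_swap {n : ℕ} (a d : ℕ) (f : Fin n → Fin n → ℕ → ℕ → ℝ) :
    ∑ i, ∑ j, ∑ k ∈ Finset.range a, ∑ l ∈ Finset.range d, f i j k l
      = ∑ k ∈ Finset.range a, ∑ l ∈ Finset.range d, ∑ i, ∑ j, f i j k l := by
  calc ∑ i, ∑ j, ∑ k ∈ Finset.range a, ∑ l ∈ Finset.range d, f i j k l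
      = ∑ i, ∑ k ∈ Finset.range a, ∑ j, ∑ l ∈ Finset.range d, f i j k l :=
        Finset.sum_congr rfl fun i _ => Finset.sum_comm
    _ = ∑ k ∈ Finset.range a, ∑ i, ∑ j, ∑ l ∈ Finset.range d, f i j k l := Finset.sum_comm
    _ = ∑ k ∈ Finset.range a, ∑ i, ∑ l ∈ Finset.range d, ∑ j, f i j k l :=
        Finset.sum_congr rfl fun k _ => Finset.sum_congr rfl fun i _ => Finset.sum_comm
    _ = ∑ k ∈ Finset.range a, ∑ l ∈ Finset.range d, ∑ i, ∑ j, f i j k l :=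
        Finset.sum_congr rfl fun k _ => Finset.sum_comm

private lemma db_expand (s : ℕ) (b c : Fin s → ℝ) (A : Matrix (Fin s) (Fin s) ℝ)
    (p q : ℕ) (P Q : Polynomial ℝ) (hPd : P.natDegree ≤ p) (hQd : Q.natDegree ≤ q) :
    (∑ i, ∑ j, b i * (Polynomial.derivative P).eval (c i) * A i j * Q.eval (c j)) =
    ∑ k ∈ Finset.range (p+1), ∑ l ∈ Finset.range (q+1),
      P.coeff k * Q.coeff l * ((k:ℝ) * ∑ i, ∑ j, b i * c i ^ (k-1) * A i j * c j ^ l) := by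
  have hQ : ∀ x : ℝ, Q.eval x = ∑ l ∈ Finset.range (q+1), Q.coeff l * x ^ l := fun x =>
    Polynomial.eval_eq_sum_range' (lt_of_le_of_lt hQd (Nat.lt_succ_self q)) x
  calc (∑ i, ∑ j, b i * (Polynomial.derivative P).eval (c i) * A i j * Q.eval (c j))
      = ∑ i, ∑ j, ∑ k ∈ Finset.range (p+1), ∑ l ∈ Finset.range (q+1),
          P.coeff k * Q.coeff l * ((k:ℝ) * (b i * c i ^ (k-1) * A i j * c j ^ l)) := by
        refine Finset.sum_congr rfl fun i _ => Finset.sum_congr rfl fun j _ => ?_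
        rw [db_deriv_eval p P hPd, hQ]
        simp only [Finset.mul_sum, Finset.sum_mul]
        rw [Finset.sum_comm]
        refine Finset.sum_congr rfl fun k _ => Finset.sum_congr rfl fun l _ => ?_
        ring
    _ = ∑ k ∈ Finset.range (p+1), ∑ l ∈ Finset.range (q+1), ∑ i, ∑ j,
          P.coeff k * Q.coeff l * ((k:ℝ) * (b i * c i ^ (k-1) * A i j * c j ^ l)) :=
        db_swap _ _ _
    _ = _ := by
        refine Finset.sum_congr rfl fun k _ => Finset.sum_congr rfl fun l _ => ?_
        simp only [Finset.mul_sum]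

private lemma db_mono (s m : ℕ) (b c : Fin s → ℝ) (A : Matrix (Fin s) (Fin s) ℝ)
    (hdb : ∀ p q : ℕ, 1 ≤ p → p < q → q ≤ m - 1 →
      (p : ℝ) * (∑ i, ∑ j, b i * c i ^ (p - 1) * A i j * c j ^ q) -
      (q : ℝ) * (∑ i, ∑ j, b i * c i ^ (q - 1) * A i j * c j ^ p) =
      1 / ((q : ℝ) + 1) - 1 / ((p : ℝ) + 1))
    (k l : ℕ) (hk : 1 ≤ k) (hk' : k ≤ m - 1) (hl : 1 ≤ l) (hl' : l ≤ m - 1) :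
    (k : ℝ) * (∑ i, ∑ j, b i * c i ^ (k - 1) * A i j * c j ^ l) -
      (l : ℝ) * (∑ i, ∑ j, b i * c i ^ (l - 1) * A i j * c j ^ k) =
      1 / ((l : ℝ) + 1) - 1 / ((k : ℝ) + 1) := by
  rcases lt_trichotomy k l with h | h | h
  · exact hdb k l hk h hl'
  · subst h; ring
  · have := hdb l k hl h hk'
    linarith

private lemma db_integral (q : ℕ) (Q : Polynomial ℝ) (hQd : Q.natDegree ≤ q) :
    (∫ t in (0:ℝ)..1, Q.eval t)
      = ∑ l ∈ Finset.range (q+1), Q.coeff l * (1 / ((l:ℝ) + 1)) := by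
  have hQ : ∀ x : ℝ, Q.eval x = ∑ l ∈ Finset.range (q+1), Q.coeff l * x ^ l := fun x =>
    Polynomial.eval_eq_sum_range' (lt_of_le_of_lt hQd (Nat.lt_succ_self q)) x
  simp only [hQ]
  rw [intervalIntegral.integral_finset_sum (fun l _ =>
    ((show Continuous (fun t : ℝ => Q.coeff l * t ^ l) from
      continuous_const.mul (continuous_pow l)).intervalIntegrable 0 1))]
  refine Finset.sum_congr rfl fun l _ => ?_
  rw [intervalIntegral.integral_const_mul, integral_pow]
  push_cast
  ring

/-- The double bush conditions in polynomial form. -/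
theorem double_bush_polynomial_form (s m : ℕ) (b c : Fin s → ℝ)
    (A : Matrix (Fin s) (Fin s) ℝ)
    (hquad : ∀ k : ℕ, 1 ≤ k → k ≤ m → ∑ i, b i * c i ^ (k - 1) = 1 / (k : ℝ))
    (hdb : ∀ p q : ℕ, 1 ≤ p → p < q → q ≤ m - 1 →
      (p : ℝ) * (∑ i, ∑ j, b i * c i ^ (p - 1) * A i j * c j ^ q) -
      (q : ℝ) * (∑ i, ∑ j, b i * c i ^ (q - 1) * A i j * c j ^ p) =
      1 / ((q : ℝ) + 1) - 1 / ((p : ℝ) + 1))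
    (p q : ℕ) (hp : p ≤ m - 1) (hq : q ≤ m - 1)
    (P Q : Polynomial ℝ) (hPd : P.natDegree ≤ p) (hQd : Q.natDegree ≤ q)
    (hP0 : P.eval 0 = 0) (hQ0 : Q.eval 0 = 0) :
    (∑ i, ∑ j, b i * (Polynomial.derivative P).eval (c i) * A i j * Q.eval (c j)) -
    (∑ i, ∑ j, b i * (Polynomial.derivative Q).eval (c i) * A i j * P.eval (c j)) =
    P.eval 1 * (∫ t in (0:ℝ)..1, Q.eval t) - Q.eval 1 * (∫ t in (0:ℝ)..1, P.eval t) := by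
  have hcP0 : P.coeff 0 = 0 := by rwa [Polynomial.coeff_zero_eq_eval_zero]
  have hcQ0 : Q.coeff 0 = 0 := by rwa [Polynomial.coeff_zero_eq_eval_zero]
  have hP1 : P.eval 1 = ∑ k ∈ Finset.range (p+1), P.coeff k := by
    rw [Polynomial.eval_eq_sum_range' (lt_of_le_of_lt hPd (Nat.lt_succ_self p))]
    simp
  have hQ1 : Q.eval 1 = ∑ l ∈ Finset.range (q+1), Q.coeff l := by
    rw [Polynomial.eval_eq_sum_range' (lt_of_le_of_lt hQd (Nat.lt_succ_self q))]
    simp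
  rw [db_expand s b c A p q P Q hPd hQd, db_expand s b c A q p Q P hQd hPd,
    db_integral q Q hQd, db_integral p P hPd, hP1, hQ1, Finset.sum_mul_sum,
    Finset.sum_mul_sum]
  rw [show (∑ k ∈ Finset.range (q+1), ∑ l ∈ Finset.range (p+1),
      Q.coeff k * P.coeff l * ((k:ℝ) * ∑ i, ∑ j, b i * c i ^ (k-1) * A i j * c j ^ l))
      = ∑ k ∈ Finset.range (p+1), ∑ l ∈ Finset.range (q+1),
      Q.coeff l * P.coeff k * ((l:ℝ) * ∑ i, ∑ j, b i * c i ^ (l-1) * A i j * c j ^ k)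
    from Finset.sum_comm]
  rw [show (∑ l ∈ Finset.range (q+1), ∑ k ∈ Finset.range (p+1),
      Q.coeff l * (P.coeff k * (1 / ((k:ℝ) + 1))))
      = ∑ k ∈ Finset.range (p+1), ∑ l ∈ Finset.range (q+1),
      Q.coeff l * (P.coeff k * (1 / ((k:ℝ) + 1))) from Finset.sum_comm]
  rw [← Finset.sum_sub_distrib, ← Finset.sum_sub_distrib]
  refine Finset.sum_congr rfl fun k hk => ?_
  rw [← Finset.sum_sub_distrib, ← Finset.sum_sub_distrib]
  refine Finset.sum_congr rfl fun l hl => ?_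
  by_cases hPk : P.coeff k = 0
  · simp [hPk]
  by_cases hQl : Q.coeff l = 0
  · simp [hQl]
  have hk1 : 1 ≤ k := Nat.one_le_iff_ne_zero.mpr (fun h => hPk (h ▸ hcP0))
  have hl1 : 1 ≤ l := Nat.one_le_iff_ne_zero.mpr (fun h => hQl (h ▸ hcQ0))
  have hkm : k ≤ m - 1 := le_trans (Nat.lt_succ_iff.mp (Finset.mem_range.mp hk)) hp
  have hlm : l ≤ m - 1 := le_trans (Nat.lt_succ_iff.mp (Finset.mem_range.mp hl)) hq
  have key := db_mono s m b c A hdb k l hk1 hkm hl1 hlm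
  linear_combination (P.coeff k * Q.coeff l) * key
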